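/- Let d > 1 be an integer. Then for every n ≥ 1 and every λ ∈ ℂ, log max{1, |(f_λ^n)'(λ)|} ≤ (d^n−1)·g_{H∞}(λ) + 2n·log d. -/

import Mathlib

open Polynomial MeasureTheory Filter

/-- The `n`-th iterate of the unicritical polynomial `f_λ(z) = z^d + λ` (as a polynomial in `z`). -/
noncomputable def uniIter (d : ℕ) (lam : ℂ) : ℕ → Polynomial ℂ
  | 0 => Polynomial.X
  | n + 1 => (Polynomial.X ^ d + Polynomial.C lam).comp (uniIter d lam n)

namespace Stmt8Aux

/-- absolute value of the orbit of `lam`. -/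
noncomputable def vv (d : ℕ) (lam : ℂ) (k : ℕ) : ℝ :=
  ‖(uniIter d lam k).eval lam‖

/-- truncated absolute value of the orbit. -/
noncomputable def MM (d : ℕ) (lam : ℂ) (k : ℕ) : ℝ := max 1 (vv d lam k)

lemma vv_nonneg (d : ℕ) (lam : ℂ) (k : ℕ) : 0 ≤ vv d lam k :=
  norm_nonneg _

lemma one_le_MM (d : ℕ) (lam : ℂ) (k : ℕ) : 1 ≤ MM d lam k := le_max_left _ _

lemma MM_pos (d : ℕ) (lam : ℂ) (k : ℕ) : 0 < MM d lam k :=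
  lt_of_lt_of_le one_pos (one_le_MM d lam k)

lemma vv_le_MM (d : ℕ) (lam : ℂ) (k : ℕ) : vv d lam k ≤ MM d lam k := le_max_right _ _

lemma vv_zero (d : ℕ) (lam : ℂ) : vv d lam 0 = ‖lam‖ := by
  simp [vv, uniIter]

lemma eval_succ (d : ℕ) (lam : ℂ) (k : ℕ) :
    (uniIter d lam (k + 1)).eval lam = ((uniIter d lam k).eval lam) ^ d + lam := by
  simp [uniIter, eval_comp]

lemma vv_succ (d : ℕ) (lam : ℂ) (k : ℕ) :
    vv d lam (k + 1) = ‖((uniIter d lam k).eval lam) ^ d + lam‖ := by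
  rw [vv, eval_succ]

lemma one_le_of_escape {d : ℕ} (hd : 1 < d) {x : ℝ} (hx : 0 ≤ x)
    (h2 : 2 ≤ x ^ (d - 1)) : 1 ≤ x := by
  by_contra h
  push_neg at h
  have : x ^ (d - 1) < 1 := pow_lt_one₀ hx h (by omega)
  linarith

lemma escape_step {d : ℕ} (hd : 1 < d) (lam : ℂ) {z : ℂ}
    (h1 : ‖lam‖ ≤ ‖z‖) (h2 : 2 ≤ ‖z‖ ^ (d - 1)) :
    ‖lam‖ ≤ ‖z ^ d + lam‖ ∧
      2 ≤ ‖z ^ d + lam‖ ^ (d - 1) ∧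
      ‖z‖ ≤ ‖z ^ d + lam‖ ∧
      ‖z‖ ^ d ≤ 2 * ‖z ^ d + lam‖ := by
  set x := ‖z‖ with hxdef
  set L := ‖lam‖ with hLdef
  have hx0 : 0 ≤ x := norm_nonneg _
  have hx1 : 1 ≤ x := one_le_of_escape hd hx0 h2
  have hxd : x ^ d = x ^ (d - 1) * x := by
    rw [← pow_succ]
    congr 1
    omega
  have h2x : 2 * x ≤ x ^ d := by
    rw [hxd]; nlinarith
  have habs : x ^ d - L ≤ ‖z ^ d + lam‖ := by
    have h := norm_add_le (z ^ d + lam) (-lam)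
    simp only [add_neg_cancel_right, norm_neg] at h
    have hzd : ‖z ^ d‖ = x ^ d := by rw [norm_pow]
    rw [hzd] at h
    linarith
  have hL0 : 0 ≤ L := norm_nonneg _
  have hxle : x ≤ ‖z ^ d + lam‖ := by linarith
  refine ⟨le_trans h1 hxle, ?_, hxle, ?_⟩
  · calc (2 : ℝ) ≤ x ^ (d - 1) := h2
      _ ≤ ‖z ^ d + lam‖ ^ (d - 1) := pow_le_pow_left₀ hx0 hxle _
  · nlinarith

/-- Escape chain: once escaping, escaping forever, with a doubling estimate on logs. -/
lemma escape_chain {d : ℕ} (hd : 1 < d) (lam : ℂ) (k : ℕ)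
    (h1 : ‖lam‖ ≤ vv d lam k) (h2 : 2 ≤ vv d lam k ^ (d - 1)) :
    ∀ m : ℕ,
      (‖lam‖ ≤ vv d lam (k + m) ∧ 2 ≤ vv d lam (k + m) ^ (d - 1)) ∧
      (((d : ℝ) - 1) * Real.log (MM d lam k) - Real.log 2) * (d : ℝ) ^ m + Real.log 2 ≤
        ((d : ℝ) - 1) * Real.log (MM d lam (k + m)) := by
  intro m
  induction m with
  | zero =>
      refine ⟨⟨h1, h2⟩, ?_⟩
      simp
  | succ m ih =>
      obtain ⟨⟨hE1, hE2⟩, hB⟩ := ih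
      have hstep := escape_step hd lam hE1 hE2
      rw [← vv_succ] at hstep
      obtain ⟨hs1, hs2, hs3, hs4⟩ := hstep
      have hkm1 : k + (m + 1) = (k + m) + 1 := by omega
      rw [hkm1]
      refine ⟨⟨hs1, hs2⟩, ?_⟩
      -- logs
      have hv1 : 1 ≤ vv d lam (k + m) := one_le_of_escape hd (vv_nonneg d lam _) hE2
      have hv1' : 1 ≤ vv d lam (k + m + 1) := le_trans hv1 hs3
      have hM : MM d lam (k + m) = vv d lam (k + m) := max_eq_right hv1
      have hM' : MM d lam (k + m + 1) = vv d lam (k + m + 1) := max_eq_right hv1'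
      have hlog : (d : ℝ) * Real.log (MM d lam (k + m)) ≤
          Real.log 2 + Real.log (MM d lam (k + m + 1)) := by
        rw [hM, hM']
        have hpos : (0 : ℝ) < vv d lam (k + m) ^ d := by positivity
        have := Real.log_le_log hpos hs4
        rw [Real.log_pow, Real.log_mul (by norm_num)
          (by positivity : vv d lam (k + m + 1) ≠ 0)] at this
        exact this
      have hd2 : (2 : ℝ) ≤ (d : ℝ) := by exact_mod_cast hd
      have hl2 : (0 : ℝ) ≤ Real.log 2 := Real.log_nonneg (by norm_num)
      have hmul : ((d : ℝ) - 1) * ((d : ℝ) * Real.log (MM d lam (k + m))) ≤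
          ((d : ℝ) - 1) * (Real.log 2 + Real.log (MM d lam (k + m + 1))) :=
        mul_le_mul_of_nonneg_left hlog (by linarith)
      have hmul2 : ((((d : ℝ) - 1) * Real.log (MM d lam k) - Real.log 2) * (d : ℝ) ^ m +
          Real.log 2) * (d : ℝ) ≤ (((d : ℝ) - 1) * Real.log (MM d lam (k + m))) * (d : ℝ) :=
        mul_le_mul_of_nonneg_right hB (by linarith)
      have hpow : ((d : ℝ)) ^ (m + 1) = (d : ℝ) ^ m * (d : ℝ) := pow_succ _ _
      rw [hpow]
      nlinarith [hmul, hmul2]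

/-- The key estimate: `log M_k ≤ d^k g + log 2 / (d-1)`. -/
lemma key {d : ℕ} (hd : 1 < d) (lam : ℂ) {G : ℝ}
    (hgl : Tendsto (fun n : ℕ => Real.log (MM d lam n) / (d : ℝ) ^ n) atTop (nhds G))
    (hG0 : 0 ≤ G) (k : ℕ) :
    Real.log (MM d lam k) ≤ (d : ℝ) ^ k * G + Real.log 2 / ((d : ℝ) - 1) := by
  have hd2 : (2 : ℝ) ≤ (d : ℝ) := by exact_mod_cast hd
  have hdm1 : (0 : ℝ) < (d : ℝ) - 1 := by linarith
  have hl2 : (0 : ℝ) ≤ Real.log 2 := Real.log_nonneg (by norm_num)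
  have hdk : (0 : ℝ) < (d : ℝ) ^ k := by positivity
  by_cases hsmall : Real.log (MM d lam k) ≤ Real.log 2 / ((d : ℝ) - 1)
  · have : 0 ≤ (d : ℝ) ^ k * G := mul_nonneg hdk.le hG0
    linarith
  push_neg at hsmall
  -- so in particular `2 ≤ vv k ^ (d-1)`
  have hE2 : 2 ≤ vv d lam k ^ (d - 1) := by
    by_contra hcon
    push_neg at hcon
    have hMle : MM d lam k ^ (d - 1) ≤ 2 := by
      rcases le_total (vv d lam k) 1 with h | h
      · have hMeq : MM d lam k = 1 := max_eq_left h
        rw [hMeq, one_pow]; norm_num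
      · have hMeq : MM d lam k = vv d lam k := max_eq_right h
        rw [hMeq]; linarith
    have h1M : (0 : ℝ) < MM d lam k ^ (d - 1) := pow_pos (MM_pos d lam k) _
    have hlogM := Real.log_le_log h1M hMle
    rw [Real.log_pow] at hlogM
    have hcast : ((d - 1 : ℕ) : ℝ) = (d : ℝ) - 1 := by
      push_cast [Nat.cast_sub hd.le]
      ring
    rw [hcast] at hlogM
    have : Real.log (MM d lam k) ≤ Real.log 2 / ((d : ℝ) - 1) := by
      rw [le_div_iff₀ hdm1]
      have h0M : 0 ≤ Real.log (MM d lam k) := Real.log_nonneg (one_le_MM d lam k)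
      nlinarith
    linarith
  -- escape from index k (maybe after deducing escape from 0)
  have hEk : ‖lam‖ ≤ vv d lam k := by
    by_contra hE1
    push_neg at hE1
    have hlam2 : 2 ≤ ‖lam‖ ^ (d - 1) := by
      calc (2 : ℝ) ≤ vv d lam k ^ (d - 1) := hE2
        _ ≤ ‖lam‖ ^ (d - 1) :=
          pow_le_pow_left₀ (vv_nonneg d lam k) hE1.le _
    have h0 := escape_chain hd lam 0 (by rw [vv_zero]) (by rw [vv_zero]; exact hlam2) k
    rw [zero_add] at h0
    exact absurd h0.1.1 (not_le.mpr hE1)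
  -- the chain estimate from k
  have hchain := escape_chain hd lam k hEk hE2
  set s : ℝ := ((d : ℝ) - 1) * Real.log (MM d lam k) - Real.log 2 with hs
  have hc : ∀ n, k ≤ n → s / (((d : ℝ) - 1) * (d : ℝ) ^ k) ≤
      Real.log (MM d lam n) / (d : ℝ) ^ n := by
    intro n hn
    obtain ⟨m, rfl⟩ : ∃ m, n = k + m := ⟨n - k, by omega⟩
    have hb := (hchain m).2
    have hdn : (0 : ℝ) < (d : ℝ) ^ (k + m) := by positivity
    have hdm : (0 : ℝ) < (d : ℝ) ^ m := by positivity
    rw [div_le_div_iff₀ (by positivity) hdn, pow_add]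
    have h1 : s * (d : ℝ) ^ m ≤ ((d : ℝ) - 1) * Real.log (MM d lam (k + m)) := by
      linarith
    have h2 := mul_le_mul_of_nonneg_right h1 hdk.le
    nlinarith [h2]
  have hGe : s / (((d : ℝ) - 1) * (d : ℝ) ^ k) ≤ G :=
    ge_of_tendsto hgl (Filter.eventually_atTop.2 ⟨k, hc⟩)
  rw [div_le_iff₀ (by positivity)] at hGe
  have hq : Real.log 2 / ((d : ℝ) - 1) * ((d : ℝ) - 1) = Real.log 2 :=
    div_mul_cancel₀ _ (ne_of_gt hdm1)
  nlinarith [hGe, hq, hdk, hdm1]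

/-- absolute value of the derivative evaluated at `lam`. -/
noncomputable def DD (d : ℕ) (lam : ℂ) (k : ℕ) : ℝ :=
  ‖(Polynomial.derivative (uniIter d lam k)).eval lam‖

lemma deriv_succ (d : ℕ) (lam : ℂ) (k : ℕ) :
    (Polynomial.derivative (uniIter d lam (k + 1))).eval lam =
      (Polynomial.derivative (uniIter d lam k)).eval lam *
        ((d : ℂ) * ((uniIter d lam k).eval lam) ^ (d - 1)) := by
  have hu : uniIter d lam (k + 1) = (X ^ d + C lam).comp (uniIter d lam k) := by
    rw [uniIter]
  rw [hu, derivative_comp]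
  simp [derivative_X_pow, eval_comp]

lemma DD_succ (d : ℕ) (lam : ℂ) (k : ℕ) :
    DD d lam (k + 1) = DD d lam k * ((d : ℝ) * vv d lam k ^ (d - 1)) := by
  rw [DD, deriv_succ, norm_mul, norm_mul, norm_pow]
  simp [DD, vv]

set_option maxHeartbeats 1000000 in
lemma DD_bound {d : ℕ} (hd : 1 < d) (lam : ℂ) :
    ∀ n, DD d lam n ≤ (d : ℝ) ^ n * ∏ k ∈ Finset.range n, (MM d lam k) ^ (d - 1) := by
  intro n
  induction n with
  | zero => simp [DD, uniIter]
  | succ n ih =>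
      rw [DD_succ, Finset.prod_range_succ, pow_succ]
      have h2 : vv d lam n ^ (d - 1) ≤ MM d lam n ^ (d - 1) :=
        pow_le_pow_left₀ (vv_nonneg d lam n) (vv_le_MM d lam n) _
      have hd0 : (0 : ℝ) ≤ (d : ℝ) := by positivity
      have h3 : (d : ℝ) * vv d lam n ^ (d - 1) ≤ (d : ℝ) * MM d lam n ^ (d - 1) :=
        mul_le_mul_of_nonneg_left h2 hd0
      have hx : (0 : ℝ) ≤ (d : ℝ) * vv d lam n ^ (d - 1) := by
        have := vv_nonneg d lam n
        positivity
      have hy : (0 : ℝ) ≤ (d : ℝ) ^ n * ∏ k ∈ Finset.range n, (MM d lam k) ^ (d - 1) := by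
        have hprod : (0 : ℝ) ≤ ∏ k ∈ Finset.range n, (MM d lam k) ^ (d - 1) :=
          Finset.prod_nonneg fun k _ => pow_nonneg (MM_pos d lam k).le (d - 1)
        exact mul_nonneg (pow_nonneg (by positivity) n) hprod
      calc DD d lam n * ((d : ℝ) * vv d lam n ^ (d - 1)) ≤
          ((d : ℝ) ^ n * ∏ k ∈ Finset.range n, (MM d lam k) ^ (d - 1)) *
            ((d : ℝ) * MM d lam n ^ (d - 1)) := mul_le_mul ih h3 hx hy
        _ = (d : ℝ) ^ n * (d : ℝ) *
            ((∏ k ∈ Finset.range n, (MM d lam k) ^ (d - 1)) * MM d lam n ^ (d - 1)) := by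
            ring

end Stmt8Aux

open Stmt8Aux in
theorem stmt8 (d : ℕ) (hd : 1 < d)
    (g : ℂ → ℝ)
    (hg : ∀ lam : ℂ, Tendsto
      (fun n : ℕ => Real.log (max 1 (‖(uniIter d lam n).eval lam‖)) / (d : ℝ) ^ n)
      atTop (nhds (g lam))) :
    ∀ n : ℕ, 1 ≤ n → ∀ lam : ℂ,
      Real.log (max 1 (‖(Polynomial.derivative (uniIter d lam n)).eval lam‖)) ≤
        ((d : ℝ) ^ n - 1) * g lam + 2 * n * Real.log d := by
  intro n hn lam
  have hgl : Tendsto (fun n : ℕ => Real.log (MM d lam n) / (d : ℝ) ^ n) atTop (nhds (g lam)) :=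
    hg lam
  have hG0 : 0 ≤ g lam := by
    refine ge_of_tendsto hgl (Filter.Eventually.of_forall fun m => ?_)
    have h1 : 0 ≤ Real.log (MM d lam m) := Real.log_nonneg (one_le_MM d lam m)
    exact div_nonneg h1 (by positivity)
  have hkey := fun k => key hd lam hgl hG0 k
  have hd2 : (2 : ℝ) ≤ (d : ℝ) := by exact_mod_cast hd
  have hdm1 : (0 : ℝ) < (d : ℝ) - 1 := by linarith
  have hcast : ((d - 1 : ℕ) : ℝ) = (d : ℝ) - 1 := by
    push_cast [Nat.cast_sub hd.le]
    ring
  -- the product bound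
  set P : ℝ := (d : ℝ) ^ n * ∏ k ∈ Finset.range n, (MM d lam k) ^ (d - 1) with hP
  have hDP : DD d lam n ≤ P := DD_bound hd lam n
  have hprod1 : (1 : ℝ) ≤ ∏ k ∈ Finset.range n, (MM d lam k) ^ (d - 1) := by
    calc (1 : ℝ) = ∏ _k ∈ Finset.range n, (1 : ℝ) := by rw [Finset.prod_const_one]
      _ ≤ ∏ k ∈ Finset.range n, (MM d lam k) ^ (d - 1) :=
          Finset.prod_le_prod (fun k _ => zero_le_one)
            (fun k _ => one_le_pow₀ (one_le_MM d lam k))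
  have hdn1 : (1 : ℝ) ≤ (d : ℝ) ^ n := one_le_pow₀ (by linarith)
  have h1P : 1 ≤ P := by
    rw [hP]
    nlinarith
  have hmaxP : max 1 (DD d lam n) ≤ P := max_le h1P hDP
  have hlogP : Real.log (max 1 (DD d lam n)) ≤ Real.log P :=
    Real.log_le_log (lt_of_lt_of_le one_pos (le_max_left _ _)) hmaxP
  -- compute log P
  have hlogP_eq : Real.log P = n * Real.log d +
      ∑ k ∈ Finset.range n, ((d : ℝ) - 1) * Real.log (MM d lam k) := by
    rw [hP, Real.log_mul (by positivity) (by linarith), Real.log_pow,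
      Real.log_prod (fun k _ => ne_of_gt (pow_pos (MM_pos d lam k) _))]
    congr 1
    exact Finset.sum_congr rfl fun k _ => by rw [Real.log_pow, hcast]
  -- bound the sum
  have hsum : ∑ k ∈ Finset.range n, ((d : ℝ) - 1) * Real.log (MM d lam k) ≤
      ((d : ℝ) ^ n - 1) * g lam + n * Real.log 2 := by
    have hterm : ∀ k ∈ Finset.range n, ((d : ℝ) - 1) * Real.log (MM d lam k) ≤
        (d : ℝ) ^ k * (((d : ℝ) - 1) * g lam) + Real.log 2 := by
      intro k _
      have h := hkey k
      have h2 : ((d : ℝ) - 1) * Real.log (MM d lam k) ≤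
          ((d : ℝ) - 1) * ((d : ℝ) ^ k * g lam + Real.log 2 / ((d : ℝ) - 1)) :=
        mul_le_mul_of_nonneg_left h hdm1.le
      have h3 : ((d : ℝ) - 1) * (Real.log 2 / ((d : ℝ) - 1)) = Real.log 2 := by
        field_simp
      nlinarith [h2, h3]
    calc ∑ k ∈ Finset.range n, ((d : ℝ) - 1) * Real.log (MM d lam k) ≤
        ∑ k ∈ Finset.range n, ((d : ℝ) ^ k * (((d : ℝ) - 1) * g lam) + Real.log 2) :=
          Finset.sum_le_sum hterm
      _ = (∑ k ∈ Finset.range n, (d : ℝ) ^ k) * (((d : ℝ) - 1) * g lam) + n * Real.log 2 := by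
          rw [Finset.sum_add_distrib, Finset.sum_const, Finset.card_range, ← Finset.sum_mul]
          simp [nsmul_eq_mul]
      _ = ((d : ℝ) ^ n - 1) * g lam + n * Real.log 2 := by
          rw [show (∑ k ∈ Finset.range n, (d : ℝ) ^ k) * (((d : ℝ) - 1) * g lam) =
            ((∑ k ∈ Finset.range n, (d : ℝ) ^ k) * ((d : ℝ) - 1)) * g lam by ring,
            geom_sum_mul]
  have hlog2d : Real.log 2 ≤ Real.log d := Real.log_le_log (by norm_num) hd2
  have hlogd0 : 0 ≤ Real.log d := le_trans (Real.log_nonneg (by norm_num)) hlog2d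
  have hn1 : (1 : ℝ) ≤ (n : ℝ) := by exact_mod_cast hn
  have hl2 : (0 : ℝ) ≤ Real.log 2 := Real.log_nonneg (by norm_num)
  calc Real.log (max 1 (DD d lam n)) ≤ Real.log P := hlogP
    _ = n * Real.log d + ∑ k ∈ Finset.range n, ((d : ℝ) - 1) * Real.log (MM d lam k) :=
        hlogP_eq
    _ ≤ n * Real.log d + (((d : ℝ) ^ n - 1) * g lam + n * Real.log 2) := by linarith
    _ ≤ ((d : ℝ) ^ n - 1) * g lam + 2 * n * Real.log d := by nlinarith [hn1, hlog2d, hlogd0]
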